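/- For any finite 0-1 sequence ω = (ω_0, ..., ω_n), the minimal degree τ(ω) of a nonzero polynomial p with p(t_i) = 0 for i = 1,...,n and p(x_j) ≥ 0 whenever ω_j = 1 (for any fixed nodes t_1 < ... < t_n and points x_j ∈ (t_j, t_{j+1}) at positions with ω_j = 1, where t_0 = -∞, t_{n+1} = +∞) equals n - 1 + N(ω) - K(ω) + ν(ω), where N(ω) is the number of 1-digits, K(ω) is the number of inner blocks of 0's of odd length, and ν(ω) = 1 if ω is identically 0 and ν(ω) = 0 otherwise. Moreover an extremal polynomial can be chosen as a product of linear factors (x - t_i) only. -/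

import Mathlib

open Polynomial Classical

/-- `N(ω)` : the number of `1` digits among `ω_0,…,ω_n`. -/
def Ncount (n : ℕ) (ω : ℕ → Bool) : ℕ :=
  ((Finset.range (n + 1)).filter fun j => ω j = true).card

/-- `K(ω)` : the number of inner blocks of `0` digits of odd length in `(ω_0,…,ω_n)`.
An inner block is a maximal run `ω_l = … = ω_r = 0` with `ω_{l-1} = ω_{r+1} = 1`. -/
def Kcount (n : ℕ) (ω : ℕ → Bool) : ℕ :=
  (((Finset.range (n + 1)) ×ˢ (Finset.range (n + 1))).filter fun lr =>
    lr.1 ≤ lr.2 ∧ 0 < lr.1 ∧ lr.2 < n ∧ ω (lr.1 - 1) = true ∧ ω (lr.2 + 1) = true ∧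
      (∀ j ∈ Finset.Icc lr.1 lr.2, ω j = false) ∧ (lr.2 - lr.1) % 2 = 0).card

/-- `ν(ω)` : equals `1` if all digits of `(ω_0,…,ω_n)` are `0`, otherwise `0`. -/
noncomputable def nuCount (n : ℕ) (ω : ℕ → Bool) : ℕ :=
  if ∀ j ∈ Finset.range (n + 1), ω j = false then 1 else 0

lemma no_root_sign (p : Polynomial ℝ) (hp : p ≠ 0) (a b : ℝ) (hab : a < b)
    (ha : p.eval a ≠ 0) (hb : p.eval b ≠ 0)
    (hroot : ∀ r ∈ p.roots, ¬(a < r ∧ r < b)) : 0 < p.eval a * p.eval b := by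
  rcases lt_trichotomy (p.eval a) 0 with ha' | ha' | ha'
  · rcases lt_trichotomy (p.eval b) 0 with hb' | hb' | hb'
    · nlinarith
    · exact absurd hb' hb
    · obtain ⟨c, hc, hfc⟩ := intermediate_value_Ioo (le_of_lt hab)
        (p.continuousOn (s := Set.Icc a b)) (Set.mem_Ioo.mpr ⟨ha', hb'⟩)
      exact absurd ⟨hc.1, hc.2⟩ (hroot c (Polynomial.mem_roots'.mpr ⟨hp, hfc⟩))
  · exact absurd ha' ha
  · rcases lt_trichotomy (p.eval b) 0 with hb' | hb' | hb'
    · obtain ⟨c, hc, hfc⟩ := intermediate_value_Ioo' (le_of_lt hab)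
        (p.continuousOn (s := Set.Icc a b)) (Set.mem_Ioo.mpr ⟨hb', ha'⟩)
      exact absurd ⟨hc.1, hc.2⟩ (hroot c (Polynomial.mem_roots'.mpr ⟨hp, hfc⟩))
    · exact absurd hb' hb
    · nlinarith

lemma parity_sign' : ∀ (D : ℕ) (p : Polynomial ℝ), p.natDegree ≤ D → p ≠ 0 →
    ∀ a b : ℝ, a < b → p.eval a ≠ 0 → p.eval b ≠ 0 →
    (0 < p.eval a * p.eval b ↔ Even (p.roots.filter (fun r => a < r ∧ r < b)).card) := by
  intro D
  induction D with
  | zero =>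
    intro p hD hp a b hab ha hb
    have h1 : Multiset.card p.roots = 0 := by
      have := Polynomial.card_roots' p; omega
    rw [Multiset.card_eq_zero.mp h1]
    simp only [Multiset.filter_zero, Multiset.card_zero, Even.zero, iff_true]
    exact no_root_sign p hp a b hab ha hb (by simp [Multiset.card_eq_zero.mp h1])
  | succ D ih =>
    intro p hD hp a b hab ha hb
    by_cases hroot : ∃ r ∈ p.roots, a < r ∧ r < b
    · obtain ⟨r, hrmem, har, hrb⟩ := hroot
      have hr0 : p.IsRoot r := (Polynomial.mem_roots'.mp hrmem).2
      obtain ⟨q, hq⟩ := (Polynomial.dvd_iff_isRoot).mpr hr0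
      have hq0 : q ≠ 0 := by rintro rfl; simp at hq; exact hp hq
      have hXr : (X - C r : Polynomial ℝ) ≠ 0 := Polynomial.X_sub_C_ne_zero r
      have hdeg : q.natDegree ≤ D := by
        have h2 := Polynomial.natDegree_mul hXr hq0
        rw [← hq, Polynomial.natDegree_X_sub_C] at h2
        omega
      have hqa : q.eval a ≠ 0 := by intro h; apply ha; rw [hq]; simp [h]
      have hqb : q.eval b ≠ 0 := by intro h; apply hb; rw [hq]; simp [h]
      have hroots : p.roots = {r} + q.roots := by
        rw [hq, Polynomial.roots_mul (hq ▸ hp), Polynomial.roots_X_sub_C]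
      have hfilter : p.roots.filter (fun s => a < s ∧ s < b) =
          {r} + q.roots.filter (fun s => a < s ∧ s < b) := by
        rw [hroots, Multiset.filter_add]
        congr 1
        rw [Multiset.filter_singleton, if_pos ⟨har, hrb⟩]
      have ihq := ih q hdeg hq0 a b hab hqa hqb
      have hpa : p.eval a = (a - r) * q.eval a := by rw [hq]; simp
      have hpb : p.eval b = (b - r) * q.eval b := by rw [hq]; simp
      rw [hfilter, hpa, hpb]
      simp only [Multiset.card_add, Multiset.card_singleton]
      have hneg : (a - r) * (b - r) < 0 := by nlinarith
      have hrearr : (a - r) * q.eval a * ((b - r) * q.eval b)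
          = ((a - r) * (b - r)) * (q.eval a * q.eval b) := by ring
      rw [hrearr, add_comm 1, Nat.even_add_one]
      constructor
      · intro h hcon
        have := ihq.mpr hcon
        nlinarith
      · intro h
        have h2 : ¬ (0 < q.eval a * q.eval b) := fun hh => h (ihq.mp hh)
        have h3 : q.eval a * q.eval b ≠ 0 := mul_ne_zero hqa hqb
        rcases lt_trichotomy (q.eval a * q.eval b) 0 with h4 | h4 | h4
        · nlinarith
        · exact absurd h4 h3
        · exact absurd h4 h2
    · replace hroot : ∀ r ∈ p.roots, ¬(a < r ∧ r < b) := by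
        push_neg at hroot
        intro r hr hc; exact absurd (hroot r hr hc.1) (not_le.mpr hc.2)
      have hfilter : p.roots.filter (fun s => a < s ∧ s < b) = 0 :=
        Multiset.filter_eq_nil.mpr hroot
      rw [hfilter]
      simp only [Multiset.card_zero, Even.zero, iff_true]
      exact no_root_sign p hp a b hab ha hb hroot

lemma card_filter_split {α} (M : Multiset α) (P Q R : α → Prop)
    [DecidablePred P] [DecidablePred Q] [DecidablePred R]
    (h : ∀ r, P r ↔ (Q r ∨ R r)) (hd : ∀ r, ¬(Q r ∧ R r)) :
    (M.filter P).card = (M.filter Q).card + (M.filter R).card := by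
  have h1 := congrArg Multiset.card (Multiset.filter_add_filter Q R M)
  rw [Multiset.card_add, Multiset.card_add] at h1
  have h2 : M.filter (fun r => Q r ∨ R r) = M.filter P :=
    Multiset.filter_congr (fun a _ => by rw [h a])
  have h3 : M.filter (fun r => Q r ∧ R r) = 0 :=
    Multiset.filter_eq_nil.mpr (fun a _ => hd a)
  rw [h2, h3] at h1
  simp at h1
  omega

lemma count_add_lt (M : Multiset ℝ) (u : ℝ) :
    (M.filter (fun r => u ≤ r)).card = M.count u + (M.filter (fun r => u < r)).card := by
  have h := card_filter_split M (fun r => u ≤ r) (fun r => r = u) (fun r => u < r)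
    (fun r => by
      constructor
      · intro hh
        rcases eq_or_lt_of_le hh with h1 | h1
        · exact Or.inl h1.symm
        · exact Or.inr h1
      · intro hh
        rcases hh with h1 | h1
        · exact le_of_eq h1.symm
        · exact le_of_lt h1)
    (fun r hh => absurd hh.2 (by simp [hh.1]))
  rw [h, Multiset.filter_eq', Multiset.card_replicate]

lemma chain_bound (p : Polynomial ℝ) (hp : p ≠ 0) (N : ℕ) (hN : 1 ≤ N) (y : ℕ → ℝ)
    (hy : ∀ k, k + 1 < N → y k < y (k + 1))
    (hpos : ∀ k, k < N → 0 ≤ p.eval (y k))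
    (d : ℕ → ℕ)
    (hd : ∀ k, k + 1 < N → d k ≤ (p.roots.filter (fun r => y k < r ∧ r < y (k + 1))).card) :
    ∀ k, k < N → (p.roots.filter (fun r => y (N - 1) < r)).card
        + ∑ j ∈ Finset.Ico k (N - 1), (d j + d j % 2)
        ≤ (p.roots.filter (fun r => y k ≤ r)).card := by
  have ymono : ∀ i l, i + l < N → y i ≤ y (i + l) := by
    intro i l
    induction l with
    | zero => intro _; simp
    | succ l ihl =>
      intro hl
      calc y i ≤ y (i + l) := ihl (by omega)
        _ ≤ y (i + l + 1) := le_of_lt (hy _ (by omega))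
  have hsne : (insert (y (N - 1)) p.roots.toFinset).Nonempty := Finset.insert_nonempty _ _
  set z : ℝ := (insert (y (N - 1)) p.roots.toFinset).max' hsne + 1 with hzdef
  have hzy : y (N - 1) < z := by
    have := Finset.le_max' (insert (y (N - 1)) p.roots.toFinset) (y (N - 1)) (Finset.mem_insert_self _ _)
    simp only [hzdef]; linarith
  have hzr : ∀ r ∈ p.roots, r < z := by
    intro r hr
    have := Finset.le_max' (insert (y (N - 1)) p.roots.toFinset) r (Finset.mem_insert_of_mem (Multiset.mem_toFinset.mpr hr))
    simp only [hzdef]; linarith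
  have hzne : p.eval z ≠ 0 := by
    intro h
    exact absurd (hzr z (Polynomial.mem_roots'.mpr ⟨hp, h⟩)) (lt_irrefl z)
  set e : ℕ := if 0 < p.eval z then 0 else 1 with hedef
  set ind : ℕ → ℕ := fun k => ((p.roots.filter (fun r => y k ≤ r)).card + e) % 2 with hind
  have key1 : ∀ k, k < N → p.roots.count (y k) = 0 → ind k = 0 := by
    intro k hk hcnt
    have hyz : y k < z := by
      have h1 : y k ≤ y (N - 1) := by
        have := ymono k (N - 1 - k) (by omega)
        rwa [show k + (N - 1 - k) = N - 1 by omega] at this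
      linarith
    have hmem : y k ∉ p.roots := Multiset.count_eq_zero.mp hcnt
    have hne : p.eval (y k) ≠ 0 := fun h => hmem (Polynomial.mem_roots'.mpr ⟨hp, h⟩)
    have hgt : 0 < p.eval (y k) := lt_of_le_of_ne (hpos k hk) (Ne.symm hne)
    have hps := parity_sign' p.natDegree p le_rfl hp (y k) z hyz hne hzne
    have hfe : p.roots.filter (fun r => y k < r ∧ r < z)
        = p.roots.filter (fun r => y k < r) :=
      Multiset.filter_congr (fun r hr => ⟨fun h => h.1, fun h => ⟨h, hzr r hr⟩⟩)
    rw [hfe] at hps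
    have hcard : (p.roots.filter (fun r => y k ≤ r)).card
        = (p.roots.filter (fun r => y k < r)).card := by
      rw [count_add_lt, hcnt]; omega
    simp only [hind]
    rw [hcard]
    by_cases hpz : 0 < p.eval z
    · have hE : Even (p.roots.filter (fun r => y k < r)).card := hps.mp (mul_pos hgt hpz)
      rw [Nat.even_iff] at hE
      have he0 : e = 0 := by rw [hedef, if_pos hpz]
      omega
    · have hlt : p.eval z < 0 := lt_of_le_of_ne (not_lt.mp hpz) hzne
      have hE : ¬ Even (p.roots.filter (fun r => y k < r)).card := by
        intro hE
        have := hps.mpr hE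
        nlinarith
      rw [Nat.not_even_iff] at hE
      have he1 : e = 1 := by rw [hedef, if_neg hpz]
      omega
  have key2 : ∀ k, k + 1 < N → (p.roots.filter (fun r => y k ≤ r)).card
      = p.roots.count (y k) + (p.roots.filter (fun r => y k < r ∧ r < y (k + 1))).card
        + (p.roots.filter (fun r => y (k + 1) ≤ r)).card := by
    intro k hk
    rw [count_add_lt]
    have h := card_filter_split p.roots (fun r => y k < r)
      (fun r => y k < r ∧ r < y (k + 1)) (fun r => y (k + 1) ≤ r)
      (fun r => by
        constructor
        · intro h
          rcases lt_or_ge r (y (k + 1)) with h2 | h2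
          · exact Or.inl ⟨h, h2⟩
          · exact Or.inr h2
        · intro h
          rcases h with h | h
          · exact h.1
          · exact lt_of_lt_of_le (hy k hk) h)
      (fun r hh => absurd hh.1.2 (not_lt.mpr hh.2))
    omega
  have main : ∀ m k, k < N → N - 1 - k = m →
      (p.roots.filter (fun r => y (N - 1) < r)).card
        + ∑ j ∈ Finset.Ico k (N - 1), (d j + d j % 2) + ind k
      ≤ (p.roots.filter (fun r => y k ≤ r)).card := by
    intro m
    induction m with
    | zero =>
      intro k hk hm
      have hkN : k = N - 1 := by omega
      subst hkN
      rw [Finset.Ico_self, Finset.sum_empty]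
      have hsplit := count_add_lt p.roots (y (N - 1))
      by_cases hcnt : p.roots.count (y (N - 1)) = 0
      · rw [key1 _ (by omega) hcnt]
        omega
      · have hle : ind (N - 1) ≤ 1 := by
          simp only [hind]
          omega
        omega
    | succ m ihm =>
      intro k hk hm
      have hk1 : k + 1 < N := by omega
      have ih := ihm (k + 1) (by omega) (by omega)
      rw [Finset.sum_eq_sum_Ico_succ_bot (by omega : k < N - 1)]
      have hO := hd k hk1
      have hk2 := key2 k hk1
      have hiA : ind k = ((p.roots.filter (fun r => y k ≤ r)).card + e) % 2 := rfl
      have hiB : ind (k + 1) = ((p.roots.filter (fun r => y (k + 1) ≤ r)).card + e) % 2 := rfl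
      by_cases hcnt : p.roots.count (y k) = 0
      · have hi0 := key1 k (by omega) hcnt
        omega
      · omega
  intro k hk
  have h := main (N - 1 - k) k hk rfl
  omega

lemma finset_card_le_multiset {α : Type*} (s : Finset α) (f : α → ℝ) (M : Multiset ℝ)
    (hmem : ∀ i ∈ s, f i ∈ M) (hinj : Set.InjOn f s) : s.card ≤ Multiset.card M := by
  calc s.card = (s.image f).card := (Finset.card_image_of_injOn hinj).symm
    _ ≤ M.toFinset.card := Finset.card_le_card (by
        intro b hb
        rw [Finset.mem_image] at hb
        obtain ⟨a, ha, rfl⟩ := hb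
        exact Multiset.mem_toFinset.mpr (hmem a ha))
    _ ≤ Multiset.card M := Multiset.toFinset_card_le M

lemma card_fin_filter (n a b : ℕ) (hb : b ≤ n) :
    (Finset.univ.filter (fun i : Fin n => a ≤ (i : ℕ) ∧ (i : ℕ) < b)).card = b - a := by
  rw [← Nat.card_Ico a b]
  apply Finset.card_bij' (fun (i : Fin n) _ => (i : ℕ))
    (fun (m : ℕ) (hm : m ∈ Finset.Ico a b) => (⟨m, by
      rw [Finset.mem_Ico] at hm; omega⟩ : Fin n))
  case hi =>
    intro i hi
    rw [Finset.mem_filter] at hi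
    rw [Finset.mem_Ico]
    exact hi.2
  case hj =>
    intro m hm
    rw [Finset.mem_filter]
    rw [Finset.mem_Ico] at hm
    exact ⟨Finset.mem_univ _, hm⟩
  case left_inv => intro i hi; rfl
  case right_inv => intro m hm; rfl

lemma kcountB (n N : ℕ) (hn : 1 ≤ n) (ω : ℕ → Bool) (g : ℕ → ℕ) (hN : 1 ≤ N)
    (hmono : ∀ k l, k < l → l < N → g k < g l)
    (hmem : ∀ k, k < N → g k ≤ n ∧ ω (g k) = true)
    (hsurj : ∀ a, a ≤ n → ω a = true → ∃ k, k < N ∧ g k = a) :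
    Kcount n ω
      = ((Finset.range (N - 1)).filter (fun k => (g (k + 1) - g k) % 2 = 0)).card := by
  rw [Kcount]
  symm
  apply Finset.card_bij (fun (k : ℕ) _ => ((g k + 1, g (k + 1) - 1) : ℕ × ℕ))
  · intro k hk
    rw [Finset.mem_filter, Finset.mem_range] at hk
    obtain ⟨hk1, hk2⟩ := hk
    have hkN : k < N := by omega
    have hk1N : k + 1 < N := by omega
    have hlt : g k < g (k + 1) := hmono k (k + 1) (by omega) hk1N
    have hgap : 2 ≤ g (k + 1) - g k := by omega
    have hgn1 : g (k + 1) ≤ n := (hmem (k + 1) hk1N).1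
    rw [Finset.mem_filter, Finset.mem_product, Finset.mem_range, Finset.mem_range]
    refine ⟨⟨by omega, by omega⟩, by omega, by omega, by omega, ?_, ?_, ?_, by omega⟩
    · rw [show g k + 1 - 1 = g k by omega]
      exact (hmem k hkN).2
    · rw [show g (k + 1) - 1 + 1 = g (k + 1) by omega]
      exact (hmem (k + 1) hk1N).2
    · intro j hj
      rw [Finset.mem_Icc] at hj
      by_contra hfalse
      have hjt : ω j = true := by
        cases h : ω j
        · exact absurd h hfalse
        · rfl
      obtain ⟨m, hmN, hgm⟩ := hsurj j (by omega) hjt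
      have h1 : g k < g m := by omega
      have h2 : g m < g (k + 1) := by omega
      have hm1 : k < m := by
        by_contra hc
        push_neg at hc
        rcases eq_or_lt_of_le hc with rfl | hc
        · omega
        · exact absurd (hmono m k hc (by omega)) (by omega)
      have hm2 : m < k + 1 := by
        by_contra hc
        push_neg at hc
        rcases eq_or_lt_of_le hc with rfl | hc
        · omega
        · exact absurd (hmono (k + 1) m hc hmN) (by omega)
      omega
  · intro k hk k' hk' heq
    rw [Finset.mem_filter, Finset.mem_range] at hk hk'
    have h1 : g k + 1 = g k' + 1 := congrArg Prod.fst heq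
    by_contra hne
    rcases lt_or_gt_of_ne hne with h | h
    · exact absurd (hmono k k' h (by omega)) (by omega)
    · exact absurd (hmono k' k h (by omega)) (by omega)
  · intro lr hlr
    rw [Finset.mem_filter, Finset.mem_product, Finset.mem_range, Finset.mem_range] at hlr
    obtain ⟨⟨hl, hr⟩, hle, hlpos, hrn, hwl, hwr, hzero, hpar⟩ := hlr
    obtain ⟨k, hkN, hgk⟩ := hsurj (lr.1 - 1) (by omega) hwl
    obtain ⟨m, hmN, hgm⟩ := hsurj (lr.2 + 1) (by omega) hwr
    have hkm : k < m := by
      by_contra hc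
      push_neg at hc
      rcases eq_or_lt_of_le hc with rfl | hc
      · omega
      · exact absurd (hmono m k hc hkN) (by omega)
    have hk1N : k + 1 < N := by omega
    have hg1 : g (k + 1) = lr.2 + 1 := by
      by_contra hne
      have hup : g (k + 1) ≤ g m := by
        rcases eq_or_lt_of_le (show k + 1 ≤ m by omega) with rfl | hc
        · exact le_refl _
        · exact le_of_lt (hmono (k + 1) m hc hmN)
      have hlow : g k < g (k + 1) := hmono k (k + 1) (by omega) hk1N
      have hIcc : g (k + 1) ∈ Finset.Icc lr.1 lr.2 := by
        rw [Finset.mem_Icc]; omega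
      have := hzero _ hIcc
      have := (hmem (k + 1) hk1N).2
      simp_all
    refine ⟨k, ?_, ?_⟩
    · rw [Finset.mem_filter, Finset.mem_range]
      constructor
      · omega
      · omega
    · rw [Prod.ext_iff]
      constructor
      · simp only []
        omega
      · simp only []
        omega

lemma lowerB (n N : ℕ) (hn : 1 ≤ n) (hN : 1 ≤ N) (g : ℕ → ℕ)
    (hmono : ∀ k l, k < l → l < N → g k < g l) (hgn : ∀ k, k < N → g k ≤ n)
    (t : Fin n → ℝ) (ht : StrictMono t) (x : ℕ → ℝ)
    (hx1 : ∀ k, k < N → ∀ i : Fin n, (i : ℕ) < g k → t i < x (g k))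
    (hx2 : ∀ k, k < N → ∀ i : Fin n, g k ≤ (i : ℕ) → x (g k) < t i)
    (p : Polynomial ℝ) (hp : p ≠ 0) (hroot : ∀ i, p.eval (t i) = 0)
    (hnn : ∀ k, k < N → 0 ≤ p.eval (x (g k))) :
    n + ((Finset.range (N - 1)).filter (fun k => (g (k + 1) - g k) % 2 = 1)).card
      ≤ p.natDegree := by
  set y : ℕ → ℝ := fun k => x (g k) with hy
  have hrootmem : ∀ i : Fin n, t i ∈ p.roots :=
    fun i => Polynomial.mem_roots'.mpr ⟨hp, hroot i⟩
  have hyy : ∀ k, k + 1 < N → y k < y (k + 1) := by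
    intro k hk
    have h1 : g k < g (k + 1) := hmono k (k + 1) (by omega) hk
    have h2 : g k < n := by
      have := hgn (k + 1) hk
      omega
    have := hx2 k (by omega) ⟨g k, h2⟩ (le_refl _)
    have := hx1 (k + 1) hk ⟨g k, h2⟩ h1
    simp only [hy]
    linarith
  -- the chain bound
  have hdle : ∀ k, k + 1 < N → g (k + 1) - g k
      ≤ (p.roots.filter (fun r => y k < r ∧ r < y (k + 1))).card := by
    intro k hk
    have h1 := card_fin_filter n (g k) (g (k + 1)) (hgn (k + 1) hk)
    have h2 := finset_card_le_multiset
      (Finset.univ.filter (fun i : Fin n => g k ≤ (i : ℕ) ∧ (i : ℕ) < g (k + 1))) t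
      (p.roots.filter (fun r => y k < r ∧ r < y (k + 1)))
      (by
        intro i hi
        rw [Finset.mem_filter] at hi
        rw [Multiset.mem_filter]
        exact ⟨hrootmem i, hx2 k (by omega) i hi.2.1, hx1 (k + 1) hk i hi.2.2⟩)
      (fun a _ b _ hab => ht.injective hab)
    omega
  have hchain := chain_bound p hp N hN y hyy (fun k hk => hnn k hk)
    (fun k => g (k + 1) - g k) hdle 0 (by omega)
  -- left region
  have hleft : g 0 ≤ (p.roots.filter (fun r => r < y 0)).card := by
    have h1 := card_fin_filter n 0 (g 0) (hgn 0 (by omega))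
    have h2 := finset_card_le_multiset
      (Finset.univ.filter (fun i : Fin n => 0 ≤ (i : ℕ) ∧ (i : ℕ) < g 0)) t
      (p.roots.filter (fun r => r < y 0))
      (by
        intro i hi
        rw [Finset.mem_filter] at hi
        rw [Multiset.mem_filter]
        exact ⟨hrootmem i, hx1 0 (by omega) i hi.2.2⟩)
      (fun a _ b _ hab => ht.injective hab)
    omega
  -- right region
  have hright : n - g (N - 1) ≤ (p.roots.filter (fun r => y (N - 1) < r)).card := by
    have h1 := card_fin_filter n (g (N - 1)) n (le_refl n)
    have h2 := finset_card_le_multiset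
      (Finset.univ.filter (fun i : Fin n => g (N - 1) ≤ (i : ℕ) ∧ (i : ℕ) < n)) t
      (p.roots.filter (fun r => y (N - 1) < r))
      (by
        intro i hi
        rw [Finset.mem_filter] at hi
        rw [Multiset.mem_filter]
        exact ⟨hrootmem i, hx2 (N - 1) (by omega) i hi.2.1⟩)
      (fun a _ b _ hab => ht.injective hab)
    omega
  -- split all roots
  have hsplit : (p.roots.filter (fun r => r < y 0)).card
      + (p.roots.filter (fun r => y 0 ≤ r)).card = Multiset.card p.roots := by
    have h := card_filter_split p.roots (fun _ => True) (fun r => r < y 0)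
      (fun r => y 0 ≤ r)
      (fun r => by constructor <;> intro <;> [exact lt_or_ge r (y 0); trivial])
      (fun r hh => absurd hh.2 (not_le.mpr hh.1))
    rw [Multiset.filter_eq_self.mpr (fun _ _ => trivial)] at h
    omega
  -- telescoping sums
  have gmono' : ∀ k l, k ≤ l → l < N → g k ≤ g l := by
    intro k l hkl hl
    rcases eq_or_lt_of_le hkl with rfl | h
    · exact le_refl _
    · exact le_of_lt (hmono k l h hl)
  have tele : ∀ m, m < N → (∑ j ∈ Finset.Ico 0 m, (g (j + 1) - g j)) = g m - g 0 := by
    intro m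
    induction m with
    | zero => intro _; simp
    | succ m ihm =>
      intro hm
      rw [Finset.sum_Ico_succ_top (by omega)]
      have h1 := ihm (by omega)
      have h2 : g m ≤ g (m + 1) := gmono' m (m + 1) (by omega) hm
      have h3 : g 0 ≤ g m := gmono' 0 m (by omega) (by omega)
      omega
  have hsum : (∑ j ∈ Finset.Ico 0 (N - 1), ((g (j + 1) - g j) + (g (j + 1) - g j) % 2))
      = (g (N - 1) - g 0)
        + ((Finset.range (N - 1)).filter (fun k => (g (k + 1) - g k) % 2 = 1)).card := by
    rw [Finset.sum_add_distrib, tele (N - 1) (by omega)]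
    congr 1
    rw [Finset.card_filter, ← Finset.range_eq_Ico]
    apply Finset.sum_congr rfl
    intro j _
    by_cases h : (g (j + 1) - g j) % 2 = 1
    · rw [if_pos h, h]
    · rw [if_neg h]
      omega
  have hcr := Polynomial.card_roots' p
  have hg0n : g 0 ≤ n := hgn 0 (by omega)
  have hgN1 : g (N - 1) ≤ n := hgn (N - 1) (by omega)
  have hg00 : g 0 ≤ g (N - 1) := gmono' 0 (N - 1) (by omega) (by omega)
  beta_reduce at hchain
  omega

lemma constructB (n N : ℕ) (hn : 1 ≤ n) (hN : 1 ≤ N) (g : ℕ → ℕ)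
    (hmono : ∀ k l, k < l → l < N → g k < g l) (hgn : ∀ k, k < N → g k ≤ n)
    (t : Fin n → ℝ) (x : ℕ → ℝ)
    (hx1 : ∀ k, k < N → ∀ i : Fin n, (i : ℕ) < g k → t i < x (g k))
    (hx2 : ∀ k, k < N → ∀ i : Fin n, g k ≤ (i : ℕ) → x (g k) < t i) :
    ∃ p : Polynomial ℝ, p ≠ 0 ∧ (∀ i, p.eval (t i) = 0) ∧
      (∀ k, k < N → 0 ≤ p.eval (x (g k))) ∧
      p.natDegree
        = n + ((Finset.range (N - 1)).filter (fun k => (g (k + 1) - g k) % 2 = 1)).card ∧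
      ∃ (r : Fin n → ℕ) (c : ℝ), (c = 1 ∨ c = -1) ∧
        p = Polynomial.C c * ∏ i, (Polynomial.X - Polynomial.C (t i)) ^ r i := by
  classical
  set dbl : Fin n → Prop :=
    fun i => ∃ k, k + 1 < N ∧ g k = (i : ℕ) ∧ (g (k + 1) - g k) % 2 = 1 with hdbl
  set r : Fin n → ℕ := fun i => if dbl i then 2 else 1 with hr
  set S : ℕ → ℕ :=
    fun j => ∑ i ∈ Finset.univ.filter (fun i : Fin n => j ≤ (i : ℕ)), r i with hS
  set c : ℝ := if S (g 0) % 2 = 0 then 1 else -1 with hc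
  have hc1 : c = 1 ∨ c = -1 := by
    rw [hc]
    by_cases h : S (g 0) % 2 = 0
    · left; rw [if_pos h]
    · right; rw [if_neg h]
  have hc0 : c ≠ 0 := by rcases hc1 with h | h <;> rw [h] <;> norm_num
  have hr1 : ∀ i, 1 ≤ r i := by
    intro i
    by_cases h : dbl i <;> simp [hr, h]
  have hmonic : (∏ i, (Polynomial.X - Polynomial.C (t i)) ^ r i).Monic :=
    Polynomial.monic_prod_of_monic _ _
      (fun i _ => (Polynomial.monic_X_sub_C (t i)).pow (r i))
  refine ⟨Polynomial.C c * ∏ i, (Polynomial.X - Polynomial.C (t i)) ^ r i,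
    mul_ne_zero (by simpa using hc0) hmonic.ne_zero, ?_, ?_, ?_, r, c, hc1, rfl⟩
  · intro i
    rw [Polynomial.eval_mul, Polynomial.eval_prod]
    apply mul_eq_zero_of_right
    apply Finset.prod_eq_zero (Finset.mem_univ i)
    rw [Polynomial.eval_pow]
    simp only [Polynomial.eval_sub, Polynomial.eval_X, Polynomial.eval_C, sub_self]
    exact zero_pow (by have := hr1 i; omega)
  · -- nonnegativity at the constrained points
    have gmono' : ∀ k l, k ≤ l → l < N → g k ≤ g l := by
      intro k l hkl hl
      rcases eq_or_lt_of_le hkl with rfl | h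
      · exact le_refl _
      · exact le_of_lt (hmono k l h hl)
    have hgapsum : ∀ k, k + 1 < N →
        (∑ i ∈ Finset.univ.filter
          (fun i : Fin n => g k ≤ (i : ℕ) ∧ (i : ℕ) < g (k + 1)), r i)
        = (g (k + 1) - g k) + (g (k + 1) - g k) % 2 := by
      intro k hk
      have hcard := card_fin_filter n (g k) (g (k + 1)) (hgn (k + 1) hk)
      set G := Finset.univ.filter
        (fun i : Fin n => g k ≤ (i : ℕ) ∧ (i : ℕ) < g (k + 1)) with hG
      have hsum : (∑ i ∈ G, r i) = G.card + (G.filter dbl).card := by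
        have hpt : ∀ i ∈ G, r i = 1 + (if dbl i then 1 else 0) := by
          intro i _
          by_cases h : dbl i <;> simp [hr, h]
        rw [Finset.sum_congr rfl hpt, Finset.sum_add_distrib]
        congr 1
        · simp
        · rw [Finset.card_filter]
      have hdblcard : (G.filter dbl).card = (g (k + 1) - g k) % 2 := by
        have hkk1 : g k < g (k + 1) := hmono k (k + 1) (by omega) hk
        have hgkn : g k < n := by
          have := hgn (k + 1) hk; omega
        have hwit : ∀ i ∈ G.filter dbl, i = (⟨g k, hgkn⟩ : Fin n) := by
          intro i hi
          rw [Finset.mem_filter, hG, Finset.mem_filter] at hi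
          obtain ⟨⟨-, hge, hlt⟩, k', hk', hgk', hpar'⟩ := hi
          have h1 : k ≤ k' := by
            by_contra hcon
            push_neg at hcon
            have := hmono k' k hcon (by omega)
            omega
          have h2 : k' < k + 1 := by
            by_contra hcon
            push_neg at hcon
            have := gmono' (k + 1) k' hcon (by omega)
            omega
          have h3 : k' = k := by omega
          subst h3
          apply Fin.ext
          simp [← hgk']
        by_cases hpar : (g (k + 1) - g k) % 2 = 1
        · rw [hpar, Finset.card_eq_one]
          refine ⟨⟨g k, hgkn⟩, ?_⟩
          apply Finset.eq_singleton_iff_unique_mem.mpr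
          constructor
          · rw [Finset.mem_filter, hG, Finset.mem_filter]
            exact ⟨⟨Finset.mem_univ _, le_refl _, hkk1⟩, k, hk, rfl, hpar⟩
          · exact hwit
        · have h0 : (g (k + 1) - g k) % 2 = 0 := by omega
          rw [h0, Finset.card_eq_zero, Finset.eq_empty_iff_forall_notMem]
          intro i hi
          have hik := hwit i hi
          rw [Finset.mem_filter] at hi
          obtain ⟨-, k', hk', hgk', hpar'⟩ := hi
          rw [hik] at hgk'
          simp only [Fin.val_mk] at hgk'
          have h1 : k ≤ k' := by
            by_contra hcon
            push_neg at hcon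
            have := hmono k' k hcon (by omega)
            omega
          have h2 : k' < k + 1 := by
            by_contra hcon
            push_neg at hcon
            have := gmono' (k + 1) k' hcon (by omega)
            omega
          have h3 : k' = k := by omega
          subst h3
          omega
      omega
    have hSgap : ∀ k, k + 1 < N →
        S (g k) = ((g (k + 1) - g k) + (g (k + 1) - g k) % 2) + S (g (k + 1)) := by
      intro k hk
      have hsplit := Finset.sum_filter_add_sum_filter_not
        (Finset.univ.filter (fun i : Fin n => g k ≤ (i : ℕ)))
        (fun i : Fin n => (i : ℕ) < g (k + 1)) r
      rw [Finset.filter_filter, Finset.filter_filter] at hsplit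
      have he1 : Finset.univ.filter (fun i : Fin n => g k ≤ (i : ℕ) ∧ (i : ℕ) < g (k + 1))
          = Finset.univ.filter (fun i : Fin n => g k ≤ (i : ℕ) ∧ (i : ℕ) < g (k + 1)) := rfl
      have he2 : Finset.univ.filter (fun i : Fin n => g k ≤ (i : ℕ) ∧ ¬ (i : ℕ) < g (k + 1))
          = Finset.univ.filter (fun i : Fin n => g (k + 1) ≤ (i : ℕ)) := by
        ext i
        simp only [Finset.mem_filter, Finset.mem_univ, true_and, not_lt]
        have := hmono k (k + 1) (by omega) hk
        omega
      rw [he2] at hsplit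
      have hg1 := hgapsum k hk
      simp only [hS]
      omega
    have hSpar : ∀ k, k < N → S (g k) % 2 = S (g 0) % 2 := by
      intro k
      induction k with
      | zero => intro _; rfl
      | succ k ih =>
        intro hk
        have h1 := hSgap k hk
        have h2 := ih (by omega)
        omega
    intro k hk
    rw [Polynomial.eval_mul, Polynomial.eval_C, Polynomial.eval_prod]
    simp only [Polynomial.eval_pow, Polynomial.eval_sub, Polynomial.eval_X,
      Polynomial.eval_C]
    rw [← Finset.prod_filter_mul_prod_filter_not Finset.univ
      (fun i : Fin n => (i : ℕ) < g k) (fun i => (x (g k) - t i) ^ r i)]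
    have hA : 0 < ∏ i ∈ Finset.univ.filter (fun i : Fin n => (i : ℕ) < g k),
        (x (g k) - t i) ^ r i := by
      apply Finset.prod_pos
      intro i hi
      rw [Finset.mem_filter] at hi
      exact pow_pos (sub_pos.mpr (hx1 k hk i hi.2)) _
    have hBpos : 0 < ∏ i ∈ Finset.univ.filter (fun i : Fin n => ¬ (i : ℕ) < g k),
        (t i - x (g k)) ^ r i := by
      apply Finset.prod_pos
      intro i hi
      rw [Finset.mem_filter] at hi
      exact pow_pos (sub_pos.mpr (hx2 k hk i (not_lt.mp hi.2))) _
    have hBeq : ∏ i ∈ Finset.univ.filter (fun i : Fin n => ¬ (i : ℕ) < g k),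
        (x (g k) - t i) ^ r i
        = (-1 : ℝ) ^ (S (g k))
          * ∏ i ∈ Finset.univ.filter (fun i : Fin n => ¬ (i : ℕ) < g k),
            (t i - x (g k)) ^ r i := by
      have hpt : ∀ i ∈ Finset.univ.filter (fun i : Fin n => ¬ (i : ℕ) < g k),
          (x (g k) - t i) ^ r i = (-1 : ℝ) ^ r i * (t i - x (g k)) ^ r i := by
        intro i _
        rw [show x (g k) - t i = -(t i - x (g k)) by ring, neg_pow]
      rw [Finset.prod_congr rfl hpt, Finset.prod_mul_distrib,
        Finset.prod_pow_eq_pow_sum]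
      congr 2
      have hseteq : Finset.univ.filter (fun i : Fin n => ¬ (i : ℕ) < g k)
          = Finset.univ.filter (fun i : Fin n => g k ≤ (i : ℕ)) := by
        ext i
        simp [not_lt]
      rw [hseteq]
    have hsign : 0 < c * (-1 : ℝ) ^ (S (g k)) := by
      have hp := hSpar k hk
      by_cases h : S (g 0) % 2 = 0
      · have hcc : c = 1 := by rw [hc, if_pos h]
        have heven : Even (S (g k)) := Nat.even_iff.mpr (by omega)
        rw [hcc, heven.neg_one_pow]
        norm_num
      · have hcc : c = -1 := by rw [hc, if_neg h]
        have hodd : Odd (S (g k)) := Nat.odd_iff.mpr (by omega)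
        rw [hcc, hodd.neg_one_pow]
        norm_num
    rw [hBeq]
    have hfin := mul_pos hsign (mul_pos hA hBpos)
    have : c * ((-1 : ℝ) ^ S (g k)) * (( ∏ i ∈ Finset.univ.filter (fun i : Fin n => (i : ℕ) < g k), (x (g k) - t i) ^ r i) * ∏ i ∈ Finset.univ.filter (fun i : Fin n => ¬ (i : ℕ) < g k), (t i - x (g k)) ^ r i)
        = c * ((∏ i ∈ Finset.univ.filter (fun i : Fin n => (i : ℕ) < g k), (x (g k) - t i) ^ r i) * ((-1 : ℝ) ^ S (g k) * ∏ i ∈ Finset.univ.filter (fun i : Fin n => ¬ (i : ℕ) < g k), (t i - x (g k)) ^ r i)) := by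
      ring
    linarith [this ▸ hfin]
  · -- degree computation
    rw [Polynomial.natDegree_C_mul hc0,
      Polynomial.natDegree_prod _ _ (fun i _ => pow_ne_zero _ (Polynomial.X_sub_C_ne_zero (t i)))]
    simp only [Polynomial.natDegree_pow, Polynomial.natDegree_X_sub_C, mul_one]
    have hsum : (∑ i, r i) = n + (Finset.univ.filter dbl).card := by
      have hpt : ∀ i ∈ Finset.univ, r i = 1 + (if dbl i then 1 else 0) := by
        intro i _
        by_cases h : dbl i <;> simp [hr, h]
      rw [Finset.sum_congr rfl hpt, Finset.sum_add_distrib]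
      congr 1
      · simp
      · rw [Finset.card_filter]
    rw [hsum]
    congr 1
    symm
    apply Finset.card_bij (fun (k : ℕ) (hk : k ∈ (Finset.range (N - 1)).filter
        (fun k => (g (k + 1) - g k) % 2 = 1)) => (⟨g k, by
      rw [Finset.mem_filter, Finset.mem_range] at hk
      have h1 : g k < g (k + 1) := hmono k (k + 1) (by omega) (by omega)
      have h2 : g (k + 1) ≤ n := hgn (k + 1) (by omega)
      omega⟩ : Fin n))
    · intro k hk
      rw [Finset.mem_filter, Finset.mem_range] at hk
      rw [Finset.mem_filter]
      exact ⟨Finset.mem_univ _, k, by omega, rfl, hk.2⟩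
    · intro k hk k' hk' heq
      rw [Finset.mem_filter, Finset.mem_range] at hk hk'
      have h1 : g k = g k' := by
        have := congrArg (Fin.val) heq
        simpa using this
      by_contra hne
      rcases lt_or_gt_of_ne hne with h | h
      · exact absurd (hmono k k' h (by omega)) (by omega)
      · exact absurd (hmono k' k h (by omega)) (by omega)
    · intro i hi
      rw [Finset.mem_filter] at hi
      obtain ⟨-, k, hk, hgk, hpar⟩ := hi
      refine ⟨k, ?_, ?_⟩
      · rw [Finset.mem_filter, Finset.mem_range]
        exact ⟨by omega, hpar⟩
      · exact Fin.ext hgk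


/-- The minimal degree `τ(ω)` of a nonzero polynomial vanishing at the nodes
`t_1 < … < t_n` and nonnegative at the interlacing points `x_j ∈ (t_j, t_{j+1})` for the
positions with `ω_j = 1` equals `n - 1 + N(ω) - K(ω) + ν(ω)`; moreover an extremal
polynomial can be chosen as (plus or minus) a product of linear factors `(x - t_i)`. -/
theorem tau_formula (n : ℕ) (hn : 1 ≤ n) (ω : ℕ → Bool)
    (t : Fin n → ℝ) (ht : StrictMono t) (x : ℕ → ℝ)
    (hx : ∀ j ≤ n, ω j = true → (∀ i : Fin n, (i : ℕ) < j → t i < x j) ∧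
      (∀ i : Fin n, j ≤ (i : ℕ) → x j < t i)) :
    IsLeast {d | ∃ p : Polynomial ℝ, p ≠ 0 ∧ (∀ i, p.eval (t i) = 0) ∧
        (∀ j ≤ n, ω j = true → 0 ≤ p.eval (x j)) ∧ p.natDegree = d}
      (n - 1 + Ncount n ω - Kcount n ω + nuCount n ω) ∧
    ∃ p : Polynomial ℝ, p ≠ 0 ∧ (∀ i, p.eval (t i) = 0) ∧
      (∀ j ≤ n, ω j = true → 0 ≤ p.eval (x j)) ∧
      p.natDegree = n - 1 + Ncount n ω - Kcount n ω + nuCount n ω ∧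
      ∃ (r : Fin n → ℕ) (c : ℝ), (c = 1 ∨ c = -1) ∧
        p = C c * ∏ i, (X - C (t i)) ^ r i := by
  classical
  by_cases hall : ∀ j ∈ Finset.range (n + 1), ω j = false
  · -- all digits zero
    have hnu : nuCount n ω = 1 := if_pos hall
    have hN0 : Ncount n ω = 0 := by
      rw [Ncount, Finset.card_eq_zero, Finset.filter_eq_empty_iff]
      intro j hj
      simp [hall j hj]
    have hK0 : Kcount n ω = 0 := by
      rw [Kcount, Finset.card_eq_zero, Finset.filter_eq_empty_iff]
      intro lr hlr
      rw [Finset.mem_product, Finset.mem_range, Finset.mem_range] at hlr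
      rintro ⟨-, -, -, h4, -⟩
      have := hall (lr.1 - 1) (Finset.mem_range.mpr (by omega))
      simp [this] at h4
    have hval : n - 1 + Ncount n ω - Kcount n ω + nuCount n ω = n := by
      rw [hN0, hK0, hnu]; omega
    rw [hval]
    have hconstr : ∀ j ≤ n, ω j = true →
        0 ≤ (∏ i, (Polynomial.X - Polynomial.C (t i))).eval (x j) := by
      intro j hj htrue
      have := hall j (Finset.mem_range.mpr (by omega))
      simp [this] at htrue
    have hmonic : (∏ i, (Polynomial.X - Polynomial.C (t i))).Monic :=
      Polynomial.monic_prod_of_monic _ _ (fun i _ => Polynomial.monic_X_sub_C (t i))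
    have hroots0 : ∀ i, (∏ i', (Polynomial.X - Polynomial.C (t i'))).eval (t i) = 0 := by
      intro i
      rw [Polynomial.eval_prod]
      apply Finset.prod_eq_zero (Finset.mem_univ i)
      simp
    have hdeg0 : (∏ i, (Polynomial.X - Polynomial.C (t i))).natDegree = n := by
      rw [Polynomial.natDegree_prod _ _
        (fun i _ => Polynomial.X_sub_C_ne_zero (t i))]
      simp
    refine ⟨⟨⟨∏ i, (Polynomial.X - Polynomial.C (t i)), hmonic.ne_zero, hroots0,
        hconstr, hdeg0⟩, ?_⟩,
      ⟨∏ i, (Polynomial.X - Polynomial.C (t i)), hmonic.ne_zero, hroots0, hconstr, hdeg0,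
        fun _ => 1, 1, Or.inl rfl, by simp⟩⟩
    rintro d ⟨p, hp, hroot, -, rfl⟩
    have hle : n ≤ Multiset.card p.roots := by
      have h := finset_card_le_multiset Finset.univ t p.roots
        (fun i _ => Polynomial.mem_roots'.mpr ⟨hp, hroot i⟩)
        (fun a _ b _ hab => ht.injective hab)
      simpa using h
    have := Polynomial.card_roots' p
    omega
  · -- at least one digit is one
    set P : Finset ℕ := (Finset.range (n + 1)).filter (fun j => ω j = true) with hP
    have hPne : P.Nonempty := by
      push_neg at hall
      obtain ⟨j, hj, hωj⟩ := hall
      exact ⟨j, by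
        rw [hP, Finset.mem_filter]
        exact ⟨hj, by
          cases h : ω j
          · exact absurd h hωj
          · rfl⟩⟩
    set L : List ℕ := P.sort (· ≤ ·) with hL
    set N : ℕ := L.length with hNdef
    have hNcard : N = Ncount n ω := by
      rw [hNdef, hL, Finset.length_sort, Ncount]
    have hN1 : 1 ≤ N := by
      rw [hNcard, Ncount]
      exact Finset.card_pos.mpr hPne
    set g : ℕ → ℕ := fun k => L.getD k 0 with hg
    have hgget : ∀ k (hk : k < N), g k = L.get ⟨k, hk⟩ :=
      fun k hk => List.getD_eq_get (l := L) (d := 0) ⟨k, hk⟩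
    have hmono : ∀ k l, k < l → l < N → g k < g l := by
      intro k l hkl hl
      rw [hgget k (by omega), hgget l hl]
      exact (Finset.sortedLT_sort P).strictMono_get
        (show (⟨k, by omega⟩ : Fin N) < ⟨l, hl⟩ from hkl)
    have hmemP : ∀ k, k < N → g k ∈ P := by
      intro k hk
      rw [hgget k hk]
      have hmm : L.get ⟨k, hk⟩ ∈ L := List.get_mem L ⟨k, hk⟩
      exact (Finset.mem_sort _).mp hmm
    have hmem : ∀ k, k < N → g k ≤ n ∧ ω (g k) = true := by
      intro k hk
      have := hmemP k hk
      rw [hP, Finset.mem_filter, Finset.mem_range] at this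
      exact ⟨by omega, this.2⟩
    have hsurj : ∀ a, a ≤ n → ω a = true → ∃ k, k < N ∧ g k = a := by
      intro a ha hωa
      have haP : a ∈ L := by
        rw [hL, Finset.mem_sort, hP, Finset.mem_filter, Finset.mem_range]
        exact ⟨by omega, hωa⟩
      obtain ⟨⟨k, hk⟩, hget⟩ := List.mem_iff_get.mp haP
      exact ⟨k, hk, by rw [hgget k hk]; exact hget⟩
    have hKval := kcountB n N hn ω g hN1 hmono hmem hsurj
    have hsplitcard : ((Finset.range (N - 1)).filter
          (fun k => (g (k + 1) - g k) % 2 = 0)).card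
        + ((Finset.range (N - 1)).filter
          (fun k => (g (k + 1) - g k) % 2 = 1)).card = N - 1 := by
      have h1 := Finset.card_filter_add_card_filter_not
        (s := Finset.range (N - 1)) (p := fun k => (g (k + 1) - g k) % 2 = 0)
      rw [Finset.card_range] at h1
      have h2 : (Finset.range (N - 1)).filter (fun k => ¬ (g (k + 1) - g k) % 2 = 0)
          = (Finset.range (N - 1)).filter (fun k => (g (k + 1) - g k) % 2 = 1) := by
        apply Finset.filter_congr
        intro k _
        constructor
        · intro h; simp at h ⊢; omega
        · intro h; simp at h ⊢; omega
      rw [h2] at h1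
      exact h1
    have hnu0 : nuCount n ω = 0 := if_neg hall
    set Godd : ℕ := ((Finset.range (N - 1)).filter
      (fun k => (g (k + 1) - g k) % 2 = 1)).card with hGodd
    have hval : n - 1 + Ncount n ω - Kcount n ω + nuCount n ω = n + Godd := by
      rw [hnu0, hKval, ← hNcard]
      omega
    rw [hval]
    have hx1 : ∀ k, k < N → ∀ i : Fin n, (i : ℕ) < g k → t i < x (g k) := by
      intro k hk i hi
      exact (hx (g k) (hmem k hk).1 (hmem k hk).2).1 i hi
    have hx2 : ∀ k, k < N → ∀ i : Fin n, g k ≤ (i : ℕ) → x (g k) < t i := by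
      intro k hk i hi
      exact (hx (g k) (hmem k hk).1 (hmem k hk).2).2 i hi
    obtain ⟨p₀, hp₀, hroot₀, hnn₀, hdeg₀, hrc₀⟩ :=
      constructB n N hn hN1 g hmono (fun k hk => (hmem k hk).1) t x hx1 hx2
    have hconstr₀ : ∀ j ≤ n, ω j = true → 0 ≤ p₀.eval (x j) := by
      intro j hj hωj
      obtain ⟨k, hk, rfl⟩ := hsurj j hj hωj
      exact hnn₀ k hk
    refine ⟨⟨⟨p₀, hp₀, hroot₀, hconstr₀, hdeg₀⟩, ?_⟩,
      ⟨p₀, hp₀, hroot₀, hconstr₀, hdeg₀, hrc₀⟩⟩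
    rintro d ⟨p, hp, hroot, hnn, rfl⟩
    exact lowerB n N hn hN1 g hmono (fun k hk => (hmem k hk).1) t ht x hx1 hx2 p hp hroot
      (fun k hk => hnn (g k) (hmem k hk).1 (hmem k hk).2)
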